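/- In the semigroup H, for any word V in the letters a1, a2, a3 and any i ∈ {1,2,3}: s1·V·Q·a_i = t_i·V·a_i·Q, and s2·R·V·Q·a_i = t_i·V·R·a_i·Q. -/

import Mathlib

inductive Phi
  | L | M | P | Q | R | g | s1 | s2 | t1 | t2 | t3 | a1 | a2 | a3
deriving DecidableEq

open Phi

abbrev W0 := WithZero (FreeMonoid Phi)

def w (l : List Phi) : W0 := ((FreeMonoid.ofList l : FreeMonoid Phi) : W0)

def ai : Fin 3 → Phi
  | 0 => a1 | 1 => a2 | 2 => a3

def ti : Fin 3 → Phi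
  | 0 => t1 | 1 => t2 | 2 => t3

def si : Fin 2 → Phi
  | 0 => s1 | 1 => s2

/-- `x` is one of the letters `a1, a2, a3`. -/
def isA (x : Phi) : Prop := x = a1 ∨ x = a2 ∨ x = a3

/-- The defining relations (1)–(14) of the semigroup `H`. -/
inductive rel : W0 → W0 → Prop
  | r1L (x : Phi) : rel (w [x, L]) 0
  | r1M (x : Phi) : rel (w [x, M]) 0
  | r2 : rel (w [L]) (w [M, P, g])
  | r3 (i : Fin 3) : rel (w [g, ai i]) (w [ai i, g])
  | r4 (x : Phi) (h : ¬ isA x) : rel (w [g, x]) 0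
  | r5 (i j : Fin 3) : rel (w [ai i, g, ai j]) (w [ai i, R, s1, Q, ai j])
  | r6 (i : Fin 3) (x : Phi) (h : x = R ∨ isA x) : rel (w [ti i, x]) (w [x, ti i])
  | r7 (i : Fin 3) : rel (w [P, ai i, ti i]) (w [ai i, P, s1])
  | r8 (i j : Fin 3) (h : i ≠ j) : rel (w [P, ai j, ti i]) (w [ai j, P, s2])
  | r9 (i : Fin 3) (j : Fin 2) : rel (w [si j, ai i]) (w [ai i, si j])
  | r10 : rel (w [s1, R]) (w [R, s1])
  | r11 (i : Fin 3) : rel (w [s1, Q, ai i]) (w [ti i, ai i, Q])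
  | r12 : rel (w [P, R, s1]) 0
  | r13 (i : Fin 3) : rel (w [s2, R, ai i]) (w [ai i, s2, R])
  | r14 (i : Fin 3) : rel (w [s2, R, Q, ai i]) (w [R, ti i, ai i, Q])

/-- The congruence on the free monoid with zero generated by the relations. -/
def hCon : Con W0 := conGen rel

/-- The semigroup (with zero) `H` of the paper. -/
abbrev H := hCon.Quotient

/-- The quotient map. -/
def q : W0 →* H := hCon.mk'

/-- `l` is a word in the letters `a1, a2, a3`. -/
def Aword (l : List Phi) : Prop := ∀ x ∈ l, isA x

/-- `l` is square-free: it contains no factor `Y ++ Y` with `Y` nonempty. -/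
def SqFree (l : List Phi) : Prop := ∀ Y : List Phi, Y ≠ [] → ¬ (Y ++ Y) <:+: l


lemma wapp (l m : List Phi) : w (l ++ m) = w l * w m := by
  simp [w]

lemma step' {l m : List Phi} (h : rel (w l) (w m)) (A B : List Phi) :
    q (w (A ++ l ++ B)) = q (w (A ++ m ++ B)) := by
  have hc : hCon (w l) (w m) := ConGen.Rel.of _ _ h
  have h2 : hCon (w A * w l * w B) (w A * w m * w B) :=
    ((hCon.refl (w A)).mul hc).mul (hCon.refl (w B))
  show hCon.mk' _ = hCon.mk' _
  rw [wapp, wapp, wapp, wapp]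
  exact hCon.eq.mpr h2

lemma lmul (A : List Phi) {l m : List Phi} (h : q (w l) = q (w m)) :
    q (w (A ++ l)) = q (w (A ++ m)) := by
  rw [wapp, wapp, map_mul, map_mul, h]

lemma isA_ex {x : Phi} (h : isA x) : ∃ j : Fin 3, x = ai j := by
  rcases h with h | h | h
  exacts [⟨0, h⟩, ⟨1, h⟩, ⟨2, h⟩]

lemma part1 (V : List Phi) (hV : Aword V) (i : Fin 3) :
    q (w ([s1] ++ V ++ [Q, ai i])) = q (w ([ti i] ++ V ++ [ai i, Q])) := by
  induction V with
  | nil => simpa using step' (rel.r11 i) [] []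
  | cons x V ih =>
    have hx : isA x := hV x List.mem_cons_self
    obtain ⟨j, rfl⟩ := isA_ex hx
    have h1 := step' (rel.r9 j 0) [] (V ++ [Q, ai i])
    have h2 := lmul [ai j] (ih (fun y hy => hV y (List.mem_cons_of_mem _ hy)))
    have h3 := step' (rel.r6 i (ai j) (Or.inr hx)) [] (V ++ [ai i, Q])
    simp only [si, List.nil_append, List.cons_append, List.append_assoc,
      List.singleton_append] at h1 h2 h3 ⊢
    exact h1.trans (h2.trans h3.symm)

lemma part2 (V : List Phi) (hV : Aword V) (i : Fin 3) :
    q (w ([s2, R] ++ V ++ [Q, ai i])) = q (w ([ti i] ++ V ++ [R, ai i, Q])) := by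
  induction V with
  | nil =>
    have h1 := step' (rel.r14 i) [] []
    have h2 := step' (rel.r6 i R (Or.inl rfl)) [] [ai i, Q]
    simp only [List.nil_append, List.cons_append, List.append_assoc,
      List.singleton_append, List.append_nil] at h1 h2 ⊢
    exact h1.trans h2.symm
  | cons x V ih =>
    have hx : isA x := hV x List.mem_cons_self
    obtain ⟨j, rfl⟩ := isA_ex hx
    have h1 := step' (rel.r13 j) [] (V ++ [Q, ai i])
    have h2 := lmul [ai j] (ih (fun y hy => hV y (List.mem_cons_of_mem _ hy)))
    have h3 := step' (rel.r6 i (ai j) (Or.inr hx)) [] (V ++ [R, ai i, Q])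
    simp only [List.nil_append, List.cons_append, List.append_assoc,
      List.singleton_append] at h1 h2 h3 ⊢
    exact h1.trans (h2.trans h3.symm)

/-- for any word `V` in `a1,a2,a3`:
`s1·V·Q·aᵢ = tᵢ·V·aᵢ·Q` and `s2·R·V·Q·aᵢ = tᵢ·V·R·aᵢ·Q`. -/
theorem stmt4 (V : List Phi) (hV : Aword V) (i : Fin 3) :
    q (w ([s1] ++ V ++ [Q, ai i])) = q (w ([ti i] ++ V ++ [ai i, Q])) ∧
    q (w ([s2, R] ++ V ++ [Q, ai i])) = q (w ([ti i] ++ V ++ [R, ai i, Q])) := ⟨part1 V hV i, part2 V hV i⟩
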